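/- arXiv:0707.3170 — 2 statements merged into one kernel-verified Lean document; each statement's English description precedes it below -/
import Mathlib

section
/- In an ω-algebraic dcpo, bounded completeness is equivalent to finite bounded completeness: any two upper-bounded elements have a least upper bound if and only if any two upper-bounded compact elements have a least upper bound. -/
/-- `a` is a compact (finite) element: whenever `a` is below the lub of a directed set,
it is below some member of the set. -/
def IsCompactElt {D : Type*} [PartialOrder D] (a : D) : Prop :=
  ∀ (X : Set D) (l : D), X.Nonempty → DirectedOn (· ≤ ·) X → IsLUB X l → a ≤ l →
    ∃ x ∈ X, a ≤ x

lemma bot_isCompactElt {D : Type*} [PartialOrder D] [OrderBot D] : IsCompactElt (⊥ : D) := by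
  intro X l hne _ _ _
  obtain ⟨x, hx⟩ := hne
  exact ⟨x, hx, bot_le⟩

/-- In an ω-algebraic dcpo, bounded completeness is equivalent to finite bounded
completeness. -/
theorem bounded_complete_iff_finitely_bounded_complete {D : Type*} [PartialOrder D] [OrderBot D]
    (hdcpo : ∀ X : Set D, X.Nonempty → DirectedOn (· ≤ ·) X → ∃ l, IsLUB X l)
    (hcount : {a : D | IsCompactElt a}.Countable)
    (halg : ∀ x : D, DirectedOn (· ≤ ·) {a | IsCompactElt a ∧ a ≤ x} ∧
      IsLUB {a | IsCompactElt a ∧ a ≤ x} x) :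
    (∀ x y : D, (∃ u, x ≤ u ∧ y ≤ u) → ∃ s, IsLUB {x, y} s) ↔
    (∀ x y : D, IsCompactElt x → IsCompactElt y → (∃ u, x ≤ u ∧ y ≤ u) →
      ∃ s, IsLUB {x, y} s) := by
  constructor
  · intro h x y _ _ hu; exact h x y hu
  · intro hfin x y ⟨u, hxu, hyu⟩
    -- set of joins of compact approximants
    set S : Set D :=
      {s | ∃ a b, IsCompactElt a ∧ a ≤ x ∧ IsCompactElt b ∧ b ≤ y ∧ IsLUB {a, b} s} with hS
    have hmem : ∀ a b, IsCompactElt a → a ≤ x → IsCompactElt b → b ≤ y →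
        ∃ s ∈ S, IsLUB {a, b} s := by
      intro a b ha hax hb hby
      obtain ⟨s, hs⟩ := hfin a b ha hb ⟨u, hax.trans hxu, hby.trans hyu⟩
      exact ⟨s, ⟨a, b, ha, hax, hb, hby, hs⟩, hs⟩
    have hne : S.Nonempty := by
      obtain ⟨s, hsS, _⟩ := hmem ⊥ ⊥ bot_isCompactElt bot_le bot_isCompactElt bot_le
      exact ⟨s, hsS⟩
    have hdir : DirectedOn (· ≤ ·) S := by
      rintro s ⟨a, b, ha, hax, hb, hby, hsl⟩ s' ⟨a', b', ha', hax', hb', hby', hsl'⟩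
      obtain ⟨a'', ⟨ha'', hax''⟩, haa, haa'⟩ :=
        (halg x).1 a ⟨ha, hax⟩ a' ⟨ha', hax'⟩
      obtain ⟨b'', ⟨hb'', hby''⟩, hbb, hbb'⟩ :=
        (halg y).1 b ⟨hb, hby⟩ b' ⟨hb', hby'⟩
      obtain ⟨t, htS, htl⟩ := hmem a'' b'' ha'' hax'' hb'' hby''
      have hat : a'' ≤ t := htl.1 (by simp)
      have hbt : b'' ≤ t := htl.1 (by simp)
      refine ⟨t, htS, ?_, ?_⟩
      · exact hsl.2 (by rintro z (rfl | rfl); exacts [haa.trans hat, hbb.trans hbt])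
      · exact hsl'.2 (by rintro z (rfl | rfl); exacts [haa'.trans hat, hbb'.trans hbt])
    obtain ⟨l, hl⟩ := hdcpo S hne hdir
    have hxl : x ≤ l := by
      refine (halg x).2.2 ?_
      rintro a ⟨ha, hax⟩
      obtain ⟨s, hsS, hsl⟩ := hmem a ⊥ ha hax bot_isCompactElt bot_le
      exact (hsl.1 (by simp)).trans (hl.1 hsS)
    have hyl : y ≤ l := by
      refine (halg y).2.2 ?_
      rintro b ⟨hb, hby⟩
      obtain ⟨s, hsS, hsl⟩ := hmem ⊥ b bot_isCompactElt bot_le hb hby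
      exact (hsl.1 (by simp)).trans (hl.1 hsS)
    refine ⟨l, ?_, ?_⟩
    · rintro z hz
      rcases hz with rfl | rfl <;> assumption
    · intro t ht
      have hxt : x ≤ t := ht (by simp)
      have hyt : y ≤ t := ht (by simp)
      refine hl.2 ?_
      rintro s ⟨a, b, ha, hax, hb, hby, hsl⟩
      exact hsl.2 (by rintro z (rfl | rfl); exacts [hax.trans hxt, hby.trans hyt])
end

section
/- If a poset P with least element is bounded complete on its elements (any two upper-bounded elements have a least upper bound), then its ideal completion Idl(P) is bounded complete: any two ideals with a common upper-bound ideal have a least upper bound in Idl(P). -/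
def IsIdeal {P : Type*} [PartialOrder P] (I : Set P) : Prop :=
  I.Nonempty ∧ DirectedOn (· ≤ ·) I ∧ ∀ a b, a ≤ b → b ∈ I → a ∈ I

/-- If `P` is bounded complete then its ideal completion is bounded complete:
two ideals with a common upper-bound ideal have a least upper bound, namely the
downward closure of the joins `a ⊔ b` for `a ∈ I`, `b ∈ J`. -/
theorem ideal_completion_bounded_complete {P : Type*} [PartialOrder P] [OrderBot P]
    (hbc : ∀ a b : P, (∃ u, a ≤ u ∧ b ≤ u) → ∃ s, IsLUB {a, b} s)
    (I J K : Set P) (hI : IsIdeal I) (hJ : IsIdeal J) (hK : IsIdeal K)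
    (hIK : I ⊆ K) (hJK : J ⊆ K) :
    IsIdeal {x : P | ∃ a ∈ I, ∃ b ∈ J, ∃ s, IsLUB {a, b} s ∧ x ≤ s} ∧
    I ⊆ {x : P | ∃ a ∈ I, ∃ b ∈ J, ∃ s, IsLUB {a, b} s ∧ x ≤ s} ∧
    J ⊆ {x : P | ∃ a ∈ I, ∃ b ∈ J, ∃ s, IsLUB {a, b} s ∧ x ≤ s} ∧
    (∀ K' : Set P, IsIdeal K' → I ⊆ K' → J ⊆ K' →
      {x : P | ∃ a ∈ I, ∃ b ∈ J, ∃ s, IsLUB {a, b} s ∧ x ≤ s} ⊆ K') := by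
  obtain ⟨hIne, hIdir, hIdown⟩ := hI
  obtain ⟨hJne, hJdir, hJdown⟩ := hJ
  obtain ⟨hKne, hKdir, hKdown⟩ := hK
  -- any a ∈ I, b ∈ J have an LUB
  have hlub : ∀ a ∈ I, ∀ b ∈ J, ∃ s, IsLUB {a, b} s := by
    intro a ha b hb
    obtain ⟨u, hu, hau, hbu⟩ := hKdir a (hIK ha) b (hJK hb)
    exact hbc a b ⟨u, hau, hbu⟩
  have hmem : ∀ a ∈ I, ∀ b ∈ J, ∀ s, IsLUB {a, b} s →
      s ∈ {x : P | ∃ a ∈ I, ∃ b ∈ J, ∃ s, IsLUB {a, b} s ∧ x ≤ s} :=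
    fun a ha b hb s hs => ⟨a, ha, b, hb, s, hs, le_refl s⟩
  refine ⟨⟨?_, ?_, ?_⟩, ?_, ?_, ?_⟩
  · obtain ⟨a, ha⟩ := hIne
    obtain ⟨b, hb⟩ := hJne
    obtain ⟨s, hs⟩ := hlub a ha b hb
    exact ⟨s, hmem a ha b hb s hs⟩
  · rintro x ⟨a, ha, b, hb, s, hs, hxs⟩ y ⟨a', ha', b', hb', s', hs', hys'⟩
    obtain ⟨a'', ha'', haa, haa'⟩ := hIdir a ha a' ha'
    obtain ⟨b'', hb'', hbb, hbb'⟩ := hJdir b hb b' hb'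
    obtain ⟨s'', hs''⟩ := hlub a'' ha'' b'' hb''
    have hsa : a'' ≤ s'' := hs''.1 (by simp)
    have hsb : b'' ≤ s'' := hs''.1 (by simp)
    refine ⟨s'', hmem a'' ha'' b'' hb'' s'' hs'', ?_, ?_⟩
    · exact hxs.trans (hs.2 (by rintro z (rfl | rfl); exacts [haa.trans hsa, hbb.trans hsb]))
    · exact hys'.trans (hs'.2 (by rintro z (rfl | rfl); exacts [haa'.trans hsa, hbb'.trans hsb]))
  · rintro x y hxy ⟨a, ha, b, hb, s, hs, hys⟩
    exact ⟨a, ha, b, hb, s, hs, hxy.trans hys⟩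
  · intro a ha
    obtain ⟨b, hb⟩ := hJne
    obtain ⟨s, hs⟩ := hlub a ha b hb
    exact ⟨a, ha, b, hb, s, hs, hs.1 (by simp)⟩
  · intro b hb
    obtain ⟨a, ha⟩ := hIne
    obtain ⟨s, hs⟩ := hlub a ha b hb
    exact ⟨a, ha, b, hb, s, hs, hs.1 (by simp)⟩
  · rintro K' ⟨hK'ne, hK'dir, hK'down⟩ hIK' hJK' x ⟨a, ha, b, hb, s, hs, hxs⟩
    obtain ⟨u, hu, hau, hbu⟩ := hK'dir a (hIK' ha) b (hJK' hb)
    have : s ≤ u := hs.2 (by rintro z (rfl | rfl); exacts [hau, hbu])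
    exact hK'down x u (hxs.trans this) hu
end
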